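/- The elementary transposition generators of the seaweed monoid are idempotent under implicit distance multiplication: P_t^Σ ⊙ P_t^Σ = P_t^Σ for every elementary transposition matrix P_t. -/
import Mathlib


def PermMat {n : ℕ} (σ : Equiv.Perm (Fin n)) : Fin n → Fin n → ℤ :=
  fun i j => if σ i = j then 1 else 0

def distSum {m n : ℕ} (D : Fin m → Fin n → ℤ) (i : Fin (m+1)) (j : Fin (n+1)) : ℤ :=
  ∑ p : Fin m, ∑ q : Fin n, if (i : ℕ) ≤ (p : ℕ) ∧ (q : ℕ) < (j : ℕ) then D p q else 0

def distProd {n : ℕ} (A B : Fin (n+1) → Fin (n+1) → ℤ) (i k : Fin (n+1)) : ℤ :=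
  Finset.univ.inf' Finset.univ_nonempty (fun j => A i j + B j k)

lemma count_lt {n : ℕ} (m : ℕ) (hm : m ≤ n) :
    (∑ p : Fin n, if (p : ℕ) < m then (1:ℤ) else 0) = (m : ℤ) := by
  induction m with
  | zero => simp
  | succ m ih =>
    have hc : ∀ p : Fin n, (if (p : ℕ) < m + 1 then (1:ℤ) else 0)
        = (if (p : ℕ) < m then (1:ℤ) else 0)
          + (if p = (⟨m, by omega⟩ : Fin n) then (1:ℤ) else 0) := by
      intro p
      simp only [Fin.ext_iff]
      split_ifs <;> omega
    rw [Finset.sum_congr rfl (fun p _ => hc p), Finset.sum_add_distrib, ih (by omega),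
      Finset.sum_ite_eq' Finset.univ]
    simp

/-- elementary transposition generators are idempotent:
`P_t^Σ ⊙ P_t^Σ = P_t^Σ`. -/
theorem seaweed_idempotent {n : ℕ} (t : ℕ) (h1 : 1 ≤ t) (h2 : t ≤ n - 1)
    (Pt : Fin n → Fin n → ℤ)
    (hPt : Pt = PermMat (Equiv.swap (⟨t - 1, by omega⟩ : Fin n) ⟨t, by omega⟩)) :
    ∀ i k : Fin (n+1),
      distProd (distSum Pt) (distSum Pt) i k = distSum Pt i k := by
  have hn : 2 ≤ n := by omega
  have ha : t - 1 < n := by omega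
  have hb : t < n := by omega
  set a : Fin n := ⟨t - 1, ha⟩ with ha'
  set b : Fin n := ⟨t, hb⟩ with hb'
  set σ : Equiv.Perm (Fin n) := Equiv.swap a b with hσ
  have hab : a ≠ b := by
    intro h
    have := congrArg Fin.val h
    simp [ha', hb'] at this
    omega
  have hPt' : Pt = PermMat σ := hPt
  -- closed form for distSum Pt
  have key : ∀ i j : Fin (n+1), distSum Pt i j =
      (if (i : ℕ) ≤ (j : ℕ) then (j : ℤ) - (i : ℤ) else 0) +
      (if (i : ℕ) = t ∧ (j : ℕ) = t then 1 else 0) := by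
    intro i j
    have inner : ∀ p : Fin n,
        (∑ q : Fin n, if (i : ℕ) ≤ (p : ℕ) ∧ (q : ℕ) < (j : ℕ) then Pt p q else 0)
        = if (i : ℕ) ≤ (p : ℕ) ∧ ((σ p : Fin n) : ℕ) < (j : ℕ) then 1 else 0 := by
      intro p
      rw [Finset.sum_eq_single (σ p)]
      · simp [hPt', PermMat]
      · intro q _ hq
        simp [hPt', PermMat, (Ne.symm hq)]
      · simp
    have hsum : distSum Pt i j
        = ∑ p : Fin n, (if (i : ℕ) ≤ (p : ℕ) ∧ ((σ p : Fin n) : ℕ) < (j : ℕ) then (1:ℤ) else 0) := by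
      unfold distSum
      exact Finset.sum_congr rfl (fun p _ => inner p)
    set F : Fin n → ℤ := fun p => if (i : ℕ) ≤ (p : ℕ) ∧ ((σ p : Fin n) : ℕ) < (j : ℕ) then 1 else 0 with hF
    set B : Fin n → ℤ := fun p => if (i : ℕ) ≤ (p : ℕ) ∧ (p : ℕ) < (j : ℕ) then 1 else 0 with hB
    have hsplit : (∑ p : Fin n, F p) = (∑ p : Fin n, B p) + ∑ p : Fin n, (F p - B p) := by
      rw [Finset.sum_sub_distrib]; ring
    have hcorr : (∑ p : Fin n, (F p - B p)) = (F a - B a) + (F b - B b) := by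
      rw [← Finset.sum_subset (Finset.subset_univ ({a, b} : Finset (Fin n)))]
      · rw [Finset.sum_pair hab]
      · intro x _ hx
        simp only [Finset.mem_insert, Finset.mem_singleton, not_or] at hx
        have : σ x = x := Equiv.swap_apply_of_ne_of_ne hx.1 hx.2
        simp [hF, hB, this]
    have hBsum : (∑ p : Fin n, B p) = (if (i : ℕ) ≤ (j : ℕ) then (j : ℤ) - (i : ℤ) else 0) := by
      have hptw : ∀ p : Fin n, B p =
          (if (p : ℕ) < (j : ℕ) then (1:ℤ) else 0) - (if (p : ℕ) < min (i : ℕ) (j : ℕ) then (1:ℤ) else 0) := by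
        intro p
        simp only [hB]
        split_ifs <;> omega
      rw [Finset.sum_congr rfl (fun p _ => hptw p), Finset.sum_sub_distrib,
        count_lt (j : ℕ) (by omega), count_lt (min (i : ℕ) (j : ℕ)) (by omega)]
      split_ifs with h <;> [skip; skip] <;> push_cast <;> omega
    have hσa : σ a = b := Equiv.swap_apply_left a b
    have hσb : σ b = a := Equiv.swap_apply_right a b
    rw [hsum, hsplit, hcorr, hBsum]
    have hav : (a : ℕ) = t - 1 := rfl
    have hbv : (b : ℕ) = t := rfl
    simp only [hF, hB, hσa, hσb, hav, hbv]
    have hj : (j : ℕ) ≤ n := by omega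
    split_ifs <;> push_cast <;> omega
  intro i k
  unfold distProd
  apply le_antisymm
  · -- choose a witness
    by_cases hc : (i : ℕ) = t ∧ t ≤ (k : ℕ)
    · have hw : (t + 1 : ℕ) < n + 1 := by omega
      calc Finset.univ.inf' Finset.univ_nonempty (fun j => distSum Pt i j + distSum Pt j k)
          ≤ distSum Pt i ⟨t+1, hw⟩ + distSum Pt ⟨t+1, hw⟩ k :=
            Finset.inf'_le _ (Finset.mem_univ _)
        _ ≤ distSum Pt i k := by
            simp only [key]
            split_ifs <;> push_cast <;> omega
    · by_cases hi : (i : ℕ) = t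
      · calc Finset.univ.inf' Finset.univ_nonempty (fun j => distSum Pt i j + distSum Pt j k)
            ≤ distSum Pt i k + distSum Pt k k := Finset.inf'_le _ (Finset.mem_univ _)
          _ ≤ distSum Pt i k := by
              simp only [key]
              split_ifs <;> push_cast <;> omega
      · calc Finset.univ.inf' Finset.univ_nonempty (fun j => distSum Pt i j + distSum Pt j k)
            ≤ distSum Pt i i + distSum Pt i k := Finset.inf'_le _ (Finset.mem_univ _)
          _ ≤ distSum Pt i k := by
              simp only [key]
              split_ifs <;> push_cast <;> omega
  · apply Finset.le_inf'
    intro j _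
    simp only [key]
    split_ifs <;> push_cast <;> omega
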